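/- Let (V,‖·‖) be a normed plane whose unit circle is an affine regular 2n-gon with n ≥ 3 even, and let x, y be consecutive vertices. Then s(x,y) = sin(π/n), where s(x,y) = inf_{t∈ℝ} ‖x + t y‖. -/

import Mathlib

open Module

variable {V : Type*} [NormedAddCommGroup V] [NormedSpace ℝ V]

noncomputable def sine {V : Type*} [NormedAddCommGroup V] [NormedSpace ℝ V] (x y : V) : ℝ :=
  ⨅ t : ℝ, ‖x + t • y‖

def BOrth {V : Type*} [NormedAddCommGroup V] [NormedSpace ℝ V] (x y : V) : Prop :=
  ∀ t : ℝ, ‖x‖ ≤ ‖x + t • y‖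

noncomputable def cD (V : Type*) [NormedAddCommGroup V] [NormedSpace ℝ V] : ℝ :=
  sInf {r : ℝ | ∃ x y : V, ‖x‖ = 1 ∧ ‖y‖ = 1 ∧ BOrth x y ∧ r = sine y x}

noncomputable def cR (V : Type*) [NormedAddCommGroup V] [NormedSpace ℝ V] : ℝ :=
  sSup {r : ℝ | ∃ x y : V, ‖x‖ = 1 ∧ ‖y‖ = 1 ∧ r = |sine x y - sine y x|}

noncomputable def vert (n k : ℕ) : ℝ × ℝ :=
  (Real.cos (2 * Real.pi * k / (2 * n)), Real.sin (2 * Real.pi * k / (2 * n)))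

theorem polygon_consecutive_vertices_sine (hV : finrank ℝ V = 2)
    (n : ℕ) (hn : 3 ≤ n) (heven : Even n) (e : (ℝ × ℝ) ≃ₗ[ℝ] V)
    (hS : {w : V | ‖w‖ = 1} =
      ⇑e '' frontier (convexHull ℝ (Set.range fun k : Fin (2 * n) => vert n k))) :
    sine (e (vert n 0)) (e (vert n 1)) = Real.sin (Real.pi / n) := by
  obtain ⟨m, hm⟩ := heven
  have hnpos : (0:ℝ) < n := by positivity
  have hn0 : (n : ℝ) ≠ 0 := hnpos.ne'
  set α : ℝ := Real.pi / n with hα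
  have hαpos : 0 < α := by positivity
  have hαlt : α < Real.pi := by
    rw [hα, div_lt_iff₀ hnpos]
    have h3 : (3:ℝ) ≤ n := by exact_mod_cast hn
    nlinarith [Real.pi_pos, mul_le_mul_of_nonneg_left h3 Real.pi_pos.le]
  have hsinpos : 0 < Real.sin α := Real.sin_pos_of_pos_of_lt_pi hαpos hαlt
  set S : Set (ℝ × ℝ) := Set.range fun k : Fin (2 * n) => vert n (k : ℕ) with hSdef
  set P : Set (ℝ × ℝ) := convexHull ℝ S with hP
  set f : ℝ × ℝ → ℝ := fun p => p.1 * Real.sin α - p.2 * Real.cos α with hfdef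
  have hf_lin : IsLinearMap ℝ f := by
    constructor
    · intro a b; simp only [hfdef, Prod.fst_add, Prod.snd_add]; ring
    · intro c a; simp only [hfdef, Prod.smul_fst, Prod.smul_snd, smul_eq_mul]; ring
  have hfS : ∀ p ∈ S, f p ≤ 1 := by
    rintro _ ⟨k, rfl⟩
    have h1 := Real.sin_le_one (α - 2 * Real.pi * (k:ℕ) / (2 * n))
    rw [Real.sin_sub] at h1
    simp only [hfdef, vert]
    nlinarith
  have hfP : ∀ p ∈ P, f p ≤ 1 := fun p hp =>
    convexHull_min hfS (convex_halfSpace_le hf_lin 1) hp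
  -- the angle computations
  have hv0 : vert n 0 = (1, 0) := by
    simp [vert]
  have hv1 : vert n 1 = (Real.cos α, Real.sin α) := by
    have h1 : 2 * Real.pi / (2 * (n:ℝ)) = α := by
      rw [hα]; field_simp
    simp only [vert, Nat.cast_one, mul_one, h1]
  set u : ℝ × ℝ := (Real.sin α, -Real.cos α) with hu
  have hPclosed : IsClosed P := ((Set.finite_range _).isCompact_convexHull (𝕜 := ℝ)).isClosed
  have huS : u ∈ S := by
    have hk : 3 * m + 1 < 2 * n := by omega
    refine ⟨⟨3 * m + 1, hk⟩, ?_⟩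
    show vert n (3 * m + 1) = u
    have hang : 2 * Real.pi * ((3 * m + 1 : ℕ) : ℝ) / (2 * n) = α + Real.pi + Real.pi / 2 := by
      have hmR : (n:ℝ) = 2 * m := by rw [hm]; push_cast; ring
      have hm0 : (m:ℝ) ≠ 0 := by
        have : 2 ≤ m := by omega
        positivity
      rw [hα, hmR]
      push_cast
      field_simp
      ring
    simp only [vert, hang]
    rw [show α + Real.pi + Real.pi / 2 = (α + Real.pi) + Real.pi / 2 by ring,
      Real.cos_add_pi_div_two, Real.sin_add_pi_div_two, Real.sin_add_pi, Real.cos_add_pi]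
    simp [hu]
  have huP : u ∈ P := subset_convexHull ℝ S huS
  have hfu : f u = 1 := by
    simp only [hfdef, hu]
    nlinarith [Real.sin_sq_add_cos_sq α]
  have hunotint : u ∉ interior P := by
    intro hint
    have hnh : interior P ∈ nhds u := isOpen_interior.mem_nhds hint
    have hcont : Filter.Tendsto (fun δ : ℝ => (1 + δ) • u)
        (nhdsWithin (0:ℝ) (Set.Ioi (0:ℝ))) (nhds u) := by
      have hc : Continuous (fun δ : ℝ => (1 + δ) • u) := by continuity
      have := hc.tendsto 0
      simp only [add_zero, one_smul] at this
      exact this.mono_left nhdsWithin_le_nhds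
    have hev : ∀ᶠ δ in nhdsWithin (0:ℝ) (Set.Ioi (0:ℝ)),
        (1 + δ) • u ∈ interior P ∧ δ ∈ Set.Ioi (0:ℝ) :=
      (hcont.eventually_mem hnh).and self_mem_nhdsWithin
    obtain ⟨δ, hmem, hδ⟩ := hev.exists
    have h1 : f ((1 + δ) • u) ≤ 1 := hfP _ (interior_subset hmem)
    have h2 : f ((1 + δ) • u) = 1 + δ := by
      rw [hf_lin.map_smul]
      simp [hfu]
    rw [h2] at h1
    have : (0:ℝ) < δ := hδ
    linarith
  have hufr : u ∈ frontier P := ⟨subset_closure huP, hunotint⟩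
  have heu : ‖e u‖ = 1 := by
    have : e u ∈ {w : V | ‖w‖ = 1} := by rw [hS]; exact ⟨u, hufr, rfl⟩
    exact this
  -- lower bound : f q ≤ ‖e q‖
  have hlow : ∀ q : ℝ × ℝ, f q ≤ ‖e q‖ := by
    intro q
    by_cases hq : e q = 0
    · have hq0 : q = 0 := (LinearEquiv.map_eq_zero_iff e).mp hq
      rw [hq0]
      simp [hfdef]
    · set c := ‖e q‖ with hc
      have hcpos : 0 < c := norm_pos_iff.mpr hq
      have h1 : ‖c⁻¹ • e q‖ = 1 := by
        rw [norm_smul, norm_inv, norm_norm, ← hc, inv_mul_cancel₀ hcpos.ne']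
      have hmem : c⁻¹ • e q ∈ {w : V | ‖w‖ = 1} := h1
      rw [hS] at hmem
      obtain ⟨p, hpF, hpe⟩ := hmem
      have hpP : p ∈ P := by
        have := hpF.1
        rwa [hPclosed.closure_eq] at this
      have hqc : q = c • p := by
        apply e.injective
        rw [map_smul, hpe, smul_smul, mul_inv_cancel₀ hcpos.ne', one_smul]
      rw [hqc, hf_lin.map_smul]
      simp only [smul_eq_mul]
      calc c * f p ≤ c * 1 := by
            exact mul_le_mul_of_nonneg_left (hfP p hpP) hcpos.le
        _ = c := mul_one c
  have key_lb : ∀ t : ℝ, Real.sin α ≤ ‖e (vert n 0) + t • e (vert n 1)‖ := by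
    intro t
    have h := hlow (vert n 0 + t • vert n 1)
    rw [map_add, map_smul] at h
    refine le_trans (le_of_eq ?_) h
    simp only [hfdef, hv0, hv1, Prod.fst_add, Prod.snd_add, Prod.smul_fst, Prod.smul_snd,
      smul_eq_mul]
    ring
  have hub : ‖e (vert n 0) + (-Real.cos α) • e (vert n 1)‖ = Real.sin α := by
    rw [← map_smul, ← map_add]
    have hcomb : vert n 0 + (-Real.cos α) • vert n 1 = Real.sin α • u := by
      rw [hv0, hv1, hu]
      have hsc := Real.sin_sq_add_cos_sq α
      simp only [Prod.smul_mk, Prod.mk_add_mk, smul_eq_mul, Prod.mk.injEq]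
      constructor
      · linear_combination -hsc
      · ring
    rw [hcomb, map_smul, norm_smul, heu, mul_one, Real.norm_eq_abs,
      abs_of_nonneg hsinpos.le]
  have hbdd : BddBelow (Set.range fun t : ℝ => ‖e (vert n 0) + t • e (vert n 1)‖) :=
    ⟨0, by rintro r ⟨t, rfl⟩; exact norm_nonneg _⟩
  unfold sine
  apply le_antisymm
  · calc (⨅ t : ℝ, ‖e (vert n 0) + t • e (vert n 1)‖)
        ≤ ‖e (vert n 0) + (-Real.cos α) • e (vert n 1)‖ := ciInf_le hbdd _
      _ = Real.sin α := hub
  · exact le_ciInf key_lb
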